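/- Let E be a countable directed graph and (X,μ) an E-branching system. Define Y = X \ ⋃_{e∈E¹} R_e. Then there exists a nonsingular map F : X → X such that F restricted to R_e equals f_e⁻¹ μ-a.e. for every e ∈ E¹. -/

import Mathlib

open MeasureTheory Set
open scoped ENNReal symmDiff

/-- Every E-branching system `(X, μ)` of a countable directed graph admits a
nonsingular map `F : X → X` with `F = f_e⁻¹` μ-a.e. on `R_e` for every edge `e`, i.e. every
E-branching system is a nonsingular E-branching system. -/
theorem stmt7 {X : Type*} [MeasurableSpace X] (μ : Measure X)
    {E0 E1 : Type*} [Countable E0] [Countable E1] (r s : E1 → E0)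
    (R : E1 → Set X) (D : E0 → Set X)
    (hRmeas : ∀ e, MeasurableSet (R e)) (hDmeas : ∀ v, MeasurableSet (D v))
    -- (1),(2) essential pairwise disjointness:
    (hRdisj : ∀ e d : E1, e ≠ d → μ (R e ∩ R d) = 0)
    (hDdisj : ∀ u v : E0, u ≠ v → μ (D u ∩ D v) = 0)
    -- (3) R_e ⊆ D_{s(e)} mod null:
    (hRD : ∀ e : E1, μ (R e \ D (s e)) = 0)
    -- (5),(6) the maps f_e and their a.e. inverses f_e⁻¹:
    (f finv : E1 → X → X) (hf : ∀ e, Measurable (f e)) (hfinv : ∀ e, Measurable (finv e))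
    (hmaps : ∀ e, Set.MapsTo (f e) (D (r e)) (R e))
    (hmapsinv : ∀ e, Set.MapsTo (finv e) (R e) (D (r e)))
    (himage : ∀ e, μ ((f e '' D (r e)) ∆ R e) = 0)
    (hright : ∀ e, ∀ᵐ x ∂μ.restrict (R e), f e (finv e x) = x)
    (hleft : ∀ e, ∀ᵐ x ∂μ.restrict (D (r e)), finv e (f e x) = x)
    -- μ∘f_e (the measure A ↦ μ(f_e(A)), which equals (μ|_{R_e}) ∘ (f_e⁻¹)⁻¹) is absolutely
    -- continuous with respect to μ on D_{r(e)}: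
    (hac : ∀ e : E1, (μ.restrict (R e)).map (finv e) ≪ μ.restrict (D (r e))) :
    ∃ F : X → X,
      -- F is nonsingular:
      (∀ A : Set X, MeasurableSet A → μ A = 0 → μ (F ⁻¹' A) = 0) ∧
      -- F = f_e⁻¹ μ-a.e. on R_e for every edge e:
      (∀ e : E1, ∀ᵐ x ∂μ.restrict (R e), F x = finv e x) := by
 classical
  -- key null-preimage fact
  have key : ∀ (e : E1) (A : Set X), MeasurableSet A → μ A = 0 →
      μ (R e ∩ finv e ⁻¹' A) = 0 := by
    intro e A hA hA0
    have h1 : (μ.restrict (R e)).map (finv e) A = 0 := by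
      apply hac e
      exact le_antisymm (le_trans (Measure.restrict_le_self A) hA0.le) zero_le
    rw [Measure.map_apply (hfinv e) hA, Measure.restrict_apply ((hfinv e) hA)] at h1
    rwa [Set.inter_comm]
  by_cases hE : Nonempty E1
  · haveI := hE; obtain ⟨g, hg⟩ := exists_surjective_nat E1
    set F : X → X := fun x => if h : ∃ n, x ∈ R (g n) then finv (g (Nat.find h)) x else x
      with hF
    refine ⟨F, ?_, ?_⟩
    · intro A hA hA0
      have hsub : F ⁻¹' A ⊆ A ∪ ⋃ n, (R (g n) ∩ finv (g n) ⁻¹' A) := by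
        intro x hx
        simp only [Set.mem_preimage, hF] at hx
        by_cases h : ∃ n, x ∈ R (g n)
        · rw [dif_pos h] at hx
          exact Or.inr (Set.mem_iUnion.mpr ⟨Nat.find h, Nat.find_spec h, hx⟩)
        · rw [dif_neg h] at hx
          exact Or.inl hx
      refine measure_mono_null hsub ?_
      refine measure_union_null hA0 (measure_iUnion_null fun n => key _ _ hA hA0)
    · intro e
      rw [ae_iff]
      have hsub : {x | ¬ (fun y => F y = finv e y) x} ∩ R e ⊆ ⋃ (d : E1), ⋃ (_ : d ≠ e), R e ∩ R d := by
        rintro x ⟨hx, hxe⟩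
        have h : ∃ n, x ∈ R (g n) := by
          obtain ⟨n, hn⟩ := hg e
          exact ⟨n, hn ▸ hxe⟩
        by_cases hd : g (Nat.find h) = e
        · exact absurd (by simp only [hF, dif_pos h, hd]) hx
        · exact Set.mem_iUnion.mpr ⟨g (Nat.find h), Set.mem_iUnion.mpr
            ⟨hd, hxe, Nat.find_spec h⟩⟩
      calc μ.restrict (R e) {x | ¬ (fun y => F y = finv e y) x}
          = μ ({x | ¬ (fun y => F y = finv e y) x} ∩ R e) := Measure.restrict_apply' (hRmeas e)
        _ = 0 := measure_mono_null hsub (measure_iUnion_null fun d =>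
            measure_iUnion_null fun hd => hRdisj e d hd.symm)
  · refine ⟨id, fun A _ h => h, fun e => (hE ⟨e⟩).elim⟩
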